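/- The overgraph of ψ_b over Π equals the convex hull of the upward vertical rays over the points (a_i, b_i): that is, {(x, y) ∈ Π × ℝ : y ≥ ψ_b(x)} = conv( ⋃_{i=1}^{N+1} { (a_i, y) : y ≥ b_i } ) as subsets of ℝ^m × ℝ. -/

import Mathlib

/-- `φ_b(ξ) = min_{1 ≤ i ≤ N+1} (b i + ⟨a i, ξ⟩)`. -/
noncomputable def phiB {N m : ℕ} (a : Fin (N + 1) → (Fin m → ℝ)) (b : Fin (N + 1) → ℝ)
    (ξ : Fin m → ℝ) : ℝ :=
  ⨅ i, (b i + ∑ j, a i j * ξ j)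

/-- The overgraph `{(x,y) ∈ Π × ℝ : y ≥ ψ_b(x)}` of the Legendre transform
`ψ_b(η) = sup_ξ (φ_b(ξ) − ⟨η, ξ⟩)`; the condition `y ≥ ψ_b(x)` is expressed as
`y` being an upper bound of the defining family. -/
noncomputable def overgraph {N m : ℕ} (a : Fin (N + 1) → (Fin m → ℝ)) (b : Fin (N + 1) → ℝ) :
    Set ((Fin m → ℝ) × ℝ) :=
  {p | p.1 ∈ convexHull ℝ (Set.range a) ∧
    ∀ ξ : Fin m → ℝ, phiB a b ξ - ∑ j, p.1 j * ξ j ≤ p.2}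

open Set Pointwise in
/-- The convex hull of the rays decomposes as a vertical ray plus a compact hull. -/
theorem rays_hull_eq_add {N m : ℕ} (a : Fin (N + 1) → (Fin m → ℝ)) (b : Fin (N + 1) → ℝ) :
    convexHull ℝ (⋃ i, {p : (Fin m → ℝ) × ℝ | p.1 = a i ∧ b i ≤ p.2})
      = ({(0 : Fin m → ℝ)} ×ˢ Set.Ici (0:ℝ))
        + convexHull ℝ (Set.range (fun i => (a i, b i))) := by
  set rays : Set ((Fin m → ℝ) × ℝ) := ⋃ i, {p : (Fin m → ℝ) × ℝ | p.1 = a i ∧ b i ≤ p.2}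
  set C : Set ((Fin m → ℝ) × ℝ) := ({(0 : Fin m → ℝ)} ×ˢ Set.Ici (0:ℝ))
  set K := convexHull ℝ (Set.range (fun i => (a i, b i)))
  apply le_antisymm
  · apply convexHull_min
    · rintro ⟨x, y⟩ hp
      simp only [rays, Set.mem_iUnion, Set.mem_setOf_eq] at hp
      obtain ⟨i, hx, hy⟩ := hp
      have : ((x, y) : (Fin m → ℝ) × ℝ) = (0, y - b i) + (a i, b i) := by
        simp [hx]
      rw [this]
      exact Set.add_mem_add (by simp [C, sub_nonneg.2 hy])
        (subset_convexHull ℝ _ (Set.mem_range_self i))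
    · exact (Convex.prod (convex_singleton _) (convex_Ici _)).add (convex_convexHull ℝ _)
  · rintro q ⟨c, hc, k, hk, rfl⟩
    have hK : K ⊆ convexHull ℝ rays := by
      apply convexHull_mono
      rintro _ ⟨i, rfl⟩
      exact Set.mem_iUnion.2 ⟨i, rfl, le_refl _⟩
    have hk' : k ∈ convexHull ℝ rays := hK hk
    have hsub : c +ᵥ rays ⊆ rays := by
      rintro _ ⟨p, hp, rfl⟩
      simp only [rays, Set.mem_iUnion, Set.mem_setOf_eq] at hp ⊢
      obtain ⟨i, hx, hy⟩ := hp
      obtain ⟨hc1, hc2⟩ := hc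
      refine ⟨i, ?_, ?_⟩
      · show c.1 + p.1 = a i
        simp only [Set.mem_singleton_iff] at hc1
        simp [hc1, hx]
      · show b i ≤ c.2 + p.2
        have : (0:ℝ) ≤ c.2 := hc2
        linarith
    have : c +ᵥ k ∈ c +ᵥ convexHull ℝ rays := Set.vadd_mem_vadd_set hk'
    rw [← convexHull_vadd] at this
    have := convexHull_mono hsub this
    simpa using this

open Set Pointwise in
theorem rays_hull_isClosed {N m : ℕ} (a : Fin (N + 1) → (Fin m → ℝ)) (b : Fin (N + 1) → ℝ) :
    IsClosed (convexHull ℝ (⋃ i, {p : (Fin m → ℝ) × ℝ | p.1 = a i ∧ b i ≤ p.2})) := by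
  rw [rays_hull_eq_add a b]
  have hC : IsClosed (({(0 : Fin m → ℝ)} ×ˢ Set.Ici (0:ℝ)) : Set ((Fin m → ℝ) × ℝ)) :=
    isClosed_singleton.prod isClosed_Ici
  have hK : IsCompact (convexHull ℝ (Set.range (fun i => (a i, b i)))) :=
    (Set.finite_range _).isCompact_convexHull ℝ
  have h := hC.vadd_right_of_isCompact hK
  have heq : (({(0 : Fin m → ℝ)} ×ˢ Set.Ici (0:ℝ)) +ᵥ
      convexHull ℝ (Set.range (fun i => (a i, b i))))
      = (({(0 : Fin m → ℝ)} ×ˢ Set.Ici (0:ℝ))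
        + convexHull ℝ (Set.range (fun i => (a i, b i)))) := rfl
  rwa [heq] at h

/-- The overgraph of `ψ_b` over `Π` equals the convex hull of the upward vertical rays
over the points `(a i, b i)`. -/
theorem overgraph_eq_convexHull_rays {N m : ℕ} (hN : 1 ≤ N)
    (a : Fin (N + 1) → (Fin m → ℝ)) (b : Fin (N + 1) → ℝ)
    (ha : a (Fin.last N) = 0) (hb : b (Fin.last N) = 0) :
    overgraph a b
      = convexHull ℝ (⋃ i, {p : (Fin m → ℝ) × ℝ | p.1 = a i ∧ b i ≤ p.2}) := by
  classical
  set rays : Set ((Fin m → ℝ) × ℝ) := ⋃ i, {p : (Fin m → ℝ) × ℝ | p.1 = a i ∧ b i ≤ p.2}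
    with hrays
  set R := convexHull ℝ rays with hR
  -- R is closed
  have hRclosed : IsClosed R := rays_hull_isClosed a b
  apply Set.eq_of_subset_of_subset
  · -- overgraph ⊆ R : by separation
    intro p hp
    by_contra hpR
    obtain ⟨f, u, hfp, hfR⟩ :=
      geometric_hahn_banach_point_closed (convex_convexHull ℝ _) hRclosed hpR
    set gl : (Fin m → ℝ) →ₗ[ℝ] ℝ :=
      (f : ((Fin m → ℝ) × ℝ) →ₗ[ℝ] ℝ).comp (LinearMap.inl ℝ (Fin m → ℝ) ℝ) with hgl
    have hglapp : ∀ x : Fin m → ℝ, gl x = f (x, 0) := fun x => rfl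
    set s : ℝ := f (0, 1) with hs
    have hsplit : ∀ (x : Fin m → ℝ) (y : ℝ), f (x, y) = gl x + y * s := by
      intro x y
      have : ((x, y) : (Fin m → ℝ) × ℝ) = (x, 0) + y • ((0:Fin m → ℝ), (1:ℝ)) := by
        simp
      rw [this, map_add, map_smul, smul_eq_mul, hglapp]
    have hray_mem : ∀ (i : Fin (N+1)) (t : ℝ), 0 ≤ t → ((a i, b i + t) : (Fin m → ℝ) × ℝ) ∈ R := by
      intro i t ht
      apply subset_convexHull ℝ rays
      exact Set.mem_iUnion.2 ⟨i, rfl, le_add_of_nonneg_right ht⟩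
    -- s ≥ 0
    have hs0 : 0 ≤ s := by
      by_contra hneg
      push_neg at hneg
      set t : ℝ := max 0 ((u - gl (a 0) - b 0 * s) / s) with htdef
      have ht0 : 0 ≤ t := le_max_left _ _
      have h1 : u < f (a 0, b 0 + t) := hfR _ (hray_mem 0 t ht0)
      rw [hsplit] at h1
      have h2 : (u - gl (a 0) - b 0 * s) / s ≤ t := le_max_right _ _
      have h3 : t * s ≤ u - gl (a 0) - b 0 * s := by
        have := mul_le_mul_of_nonpos_right h2 (le_of_lt hneg)
        rwa [div_mul_cancel₀ _ (ne_of_lt hneg)] at this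
      nlinarith
    have hfi : ∀ i, u < gl (a i) + b i * s := by
      intro i
      have := hfR _ (hray_mem i 0 le_rfl)
      rw [add_zero, hsplit] at this
      exact this
    have hfp' : gl p.1 + p.2 * s < u := by
      have := hfp
      rw [show p = (p.1, p.2) from rfl, hsplit] at this
      exact this
    rcases eq_or_lt_of_le hs0 with hs0' | hspos
    · -- s = 0 : contradiction with p.1 ∈ conv(range a)
      have hgx : u < gl p.1 := by
        have hconv : p.1 ∈ convexHull ℝ (Set.range a) := hp.1
        have : convexHull ℝ (Set.range a) ⊆ {x : Fin m → ℝ | u < gl x} := by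
          apply convexHull_min
          · rintro _ ⟨i, rfl⟩
            have := hfi i
            rw [← hs0'] at this
            simpa using this
          · exact convex_halfSpace_gt (gl.isLinear) u
        exact this hconv
      rw [← hs0'] at hfp'
      simp at hfp'
      linarith
    · -- s > 0 : contradiction with the Legendre condition
      set ξ : Fin m → ℝ := fun j => gl (fun k => if j = k then 1 else 0) / s with hξ
      have hpair : ∀ x : Fin m → ℝ, ∑ j, x j * ξ j = gl x / s := by
        intro x
        rw [LinearMap.pi_apply_eq_sum_univ gl x, Finset.sum_div]
        refine Finset.sum_congr rfl fun j _ => ?_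
        rw [smul_eq_mul, hξ, mul_div_assoc]
      have hlb : u / s ≤ phiB a b ξ := by
        apply le_ciInf
        intro i
        rw [hpair]
        rw [div_le_iff₀ hspos, add_mul, div_mul_cancel₀ _ (ne_of_gt hspos)]
        nlinarith [hfi i]
      have hub := hp.2 ξ
      rw [hpair] at hub
      have hlt : gl p.1 / s + p.2 < u / s := by
        rw [lt_div_iff₀ hspos, add_mul, div_mul_cancel₀ _ (ne_of_gt hspos)]
        exact hfp'
      linarith
  · -- R ⊆ overgraph
    apply convexHull_min
    · rintro ⟨x, y⟩ hq
      simp only [hrays, Set.mem_iUnion, Set.mem_setOf_eq] at hq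
      obtain ⟨i, hx, hy⟩ := hq
      constructor
      · exact subset_convexHull ℝ _ (hx ▸ Set.mem_range_self i)
      · intro ξ
        have hle : phiB a b ξ ≤ b i + ∑ j, a i j * ξ j :=
          ciInf_le (Set.Finite.bddBelow (Set.finite_range _)) i
        simp only [hx]
        linarith
    · -- overgraph is convex
      intro p hp q hq α β hα hβ hαβ
      constructor
      · have h1 := hp.1
        have h2 := hq.1
        have := (convex_convexHull ℝ (Set.range a)) h1 h2 hα hβ hαβ
        simpa using this
      · intro ξ
        have h1 := hp.2 ξ
        have h2 := hq.2 ξ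
        have hsum : ∑ j, (α • p + β • q).1 j * ξ j
            = α * (∑ j, p.1 j * ξ j) + β * (∑ j, q.1 j * ξ j) := by
          rw [Finset.mul_sum, Finset.mul_sum, ← Finset.sum_add_distrib]
          refine Finset.sum_congr rfl fun j _ => ?_
          simp [Prod.fst_add, Prod.smul_fst]
          ring
        have hsnd : (α • p + β • q).2 = α * p.2 + β * q.2 := rfl
        rw [hsum, hsnd]
        have key : α * (phiB a b ξ - ∑ j, p.1 j * ξ j)
            + β * (phiB a b ξ - ∑ j, q.1 j * ξ j)
            = phiB a b ξ - (α * (∑ j, p.1 j * ξ j) + β * (∑ j, q.1 j * ξ j)) := by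
          linear_combination phiB a b ξ * hαβ
        nlinarith [mul_le_mul_of_nonneg_left h1 hα, mul_le_mul_of_nonneg_left h2 hβ]
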